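/- Let M_t ≥ 1, M_r ≥ 1 be integers, n ≥ 1 an integer, and b real with b ≥ M_t·M_r. Set P = M_t·M_r, Q = M_t + M_r − 1, and r_i = P/(n·P + Q) for i = 1, …, n. Let S_i = Σ_{j=1}^i r_j and define E_i = P(1 − S_i) − Q·r_{i+1} + b·S_i for i = 0, 1, …, n−1 and E_n = b·S_n. Then S_n < 1 and min_{0 ≤ i ≤ n} E_i = E_0 = n·P²/(n·P + Q). -/

import Mathlib

/-- The equal multiplexing-gain allocation `r_i = P/(nP + Q)` for `n`-layer BS
over a single-block `M_t × M_r` MIMO channel at bandwidth ratio `b ≥ M_t M_r`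
satisfies `S_n < 1` and achieves `min_{0 ≤ i ≤ n} E_i = E_0 = nP²/(nP + Q)`. -/
theorem stmt_13 (Mt Mr n : ℕ) (hMt : 1 ≤ Mt) (hMr : 1 ≤ Mr) (hn : 1 ≤ n)
    (b : ℝ) (hb : (Mt : ℝ) * Mr ≤ b)
    (P Q : ℝ) (r S E : ℕ → ℝ)
    (hP : P = (Mt : ℝ) * Mr) (hQ : Q = (Mt : ℝ) + Mr - 1)
    -- `r i` is the multiplexing gain of layer `i+1`: `r_{i+1} = P/(nP + Q)`
    (hr : ∀ i, r i = P / (n * P + Q))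
    (hS : ∀ i, S i = ∑ j ∈ Finset.range i, r j)
    -- `E i = P(1 - S_i) - Q r_{i+1} + b S_i` for `i < n`, and `E n = b S_n`
    (hE : ∀ i, E i = if i = n then b * S n else P * (1 - S i) - Q * r i + b * S i) :
    S n < 1 ∧ (∀ i ≤ n, E 0 ≤ E i) ∧
    E 0 = n * P ^ 2 / (n * P + Q) := by
  have hMt1 : (1 : ℝ) ≤ Mt := by exact_mod_cast hMt
  have hMr1 : (1 : ℝ) ≤ Mr := by exact_mod_cast hMr
  have hn1 : (1 : ℝ) ≤ n := by exact_mod_cast hn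
  have hPpos : 0 < P := by rw [hP]; nlinarith
  have hQpos : 0 < Q := by rw [hQ]; nlinarith
  have hD : 0 < (n : ℝ) * P + Q := by nlinarith
  have hbP : P ≤ b := by rw [hP]; exact hb
  set rv : ℝ := P / (n * P + Q) with hrv
  have hrvpos : 0 < rv := div_pos hPpos hD
  have hSi : ∀ i, S i = i * rv := by
    intro i
    rw [hS i]
    rw [Finset.sum_congr rfl (fun j _ => hr j)]
    simp [Finset.sum_const, nsmul_eq_mul]
  have hkey : (n : ℝ) * P * rv + Q * rv = P := by
    rw [hrv]; field_simp
  have hSn : S n < 1 := by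
    rw [hSi]
    nlinarith [hkey, mul_pos hQpos hrvpos]
  have hE0 : E 0 = (n : ℝ) * P * rv := by
    have h0 : (0 : ℕ) ≠ n := by omega
    rw [hE 0, if_neg h0, hSi, hr]
    push_cast
    nlinarith
  refine ⟨hSn, ?_, ?_⟩
  · intro i hi
    rcases eq_or_lt_of_le hi with h | h
    · rw [hE0, hE i, if_pos h, hSi]
      have h0 : 0 ≤ (b - P) * ((n : ℝ) * rv) :=
        mul_nonneg (by linarith) (mul_nonneg (Nat.cast_nonneg n) hrvpos.le)
      have : (n : ℝ) * P * rv ≤ b * (n * rv) := by nlinarith [h0]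
      linarith
    · rw [hE0, hE i, if_neg (by omega), hSi, hr]
      have hi0 : (0 : ℝ) ≤ i := Nat.cast_nonneg i
      have : 0 ≤ (b - P) * (i * rv) := mul_nonneg (by linarith) (by positivity)
      nlinarith [hkey]
  · rw [hE0, hrv]
    field_simp
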